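/- Let r, s, t be elements of a finite semigroup S such that s does not generate a group and rs = st = s. Then there exist idempotents e, f ∈ S with es = s and sf = s such that every product a₁⋯a_k with each a_i ∈ {s, e, f} in which s occurs at least twice does not equal s. -/

import Mathlib

/-- `a ≤_J b` in a semigroup `S`: the principal ideal condition `S¹aS¹ ⊆ S¹bS¹`,
i.e. `a = u * b * v` for some `u v ∈ S¹`. -/
def JLe {S : Type*} [Semigroup S] (a b : S) : Prop :=
  ∃ u v : WithOne S, (a : WithOne S) = u * (b : WithOne S) * v

/-- Green's `J`-equivalence. -/
def JEquiv {S : Type*} [Semigroup S] (a b : S) : Prop := JLe a b ∧ JLe b a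

/-- `a` is strictly `J`-below `b`. -/
def JLt {S : Type*} [Semigroup S] (a b : S) : Prop := JLe a b ∧ ¬ JLe b a

/-- `s` generates a group: the cyclic subsemigroup generated by `s` is a group,
i.e. it contains a two-sided identity and inverses. -/
def GeneratesGroup {S : Type*} [Semigroup S] (s : S) : Prop :=
  ∃ e ∈ Subsemigroup.closure {s},
    (∀ x ∈ Subsemigroup.closure {s}, e * x = x ∧ x * e = x) ∧
    ∀ x ∈ Subsemigroup.closure {s}, ∃ y ∈ Subsemigroup.closure {s}, x * y = e ∧ y * x = e


/-- The product `a₁ ⋯ aₖ` of a nonempty list, given as head `a` and tail `l`,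
with respect to a multiplication `mul`. -/
def listProd {α : Type*} (mul : α → α → α) : α → List α → α
  | a, [] => a
  | a, b :: l => mul a (listProd mul b l)

namespace Stmt3Aux

variable {M : Type*} [Monoid M]

lemma exists_idem_pow [Finite M] (x : M) : ∃ n, 1 ≤ n ∧ x ^ n * x ^ n = x ^ n := by
  obtain ⟨i, j, hne, h⟩ := Finite.exists_ne_map_eq_of_infinite (fun n : ℕ => x ^ n)
  wlog hlt : i < j generalizing i j
  · exact this j i (Ne.symm hne) h.symm (by omega)
  have step : ∀ a, i ≤ a → x ^ (a + (j - i)) = x ^ a := by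
    intro a ha
    have h1 : x ^ (a + (j - i)) = x ^ j * x ^ (a - i) := by
      rw [← pow_add]; congr 1; omega
    have h2 : x ^ a = x ^ i * x ^ (a - i) := by
      rw [← pow_add]; congr 1; omega
    rw [h1, h2, ← h]
  have iter : ∀ k a, i ≤ a → x ^ (a + k * (j - i)) = x ^ a := by
    intro k
    induction k with
    | zero => simp
    | succ k ih =>
      intro a ha
      have e1 : a + (k + 1) * (j - i) = (a + k * (j - i)) + (j - i) := by ring
      rw [e1, step _ (by omega), ih a ha]
  refine ⟨(j - i) * (i + 1), ?_, ?_⟩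
  · have : 1 ≤ j - i := by omega
    calc 1 ≤ 1 * (i + 1) := by omega
    _ ≤ (j - i) * (i + 1) := Nat.mul_le_mul_right _ this
  · rw [← pow_add]
    have e2 : (j - i) * (i + 1) + (j - i) * (i + 1) = (j - i) * (i + 1) + (i + 1) * (j - i) := by
      ring
    rw [e2, iter (i + 1) _ ?_]
    calc i ≤ 1 * (i + 1) := by omega
    _ ≤ (j - i) * (i + 1) := Nat.mul_le_mul_right _ (by omega)

lemma core [Finite M] {s X Y : M} (h : s = X * s * Y) :
    ∃ n, 1 ≤ n ∧ X ^ n * s = s ∧ s * Y ^ n = s := by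
  have iter : ∀ n, 1 ≤ n → s = X ^ n * s * Y ^ n := by
    intro n hn
    induction n with
    | zero => omega
    | succ n ih =>
      rcases Nat.lt_or_ge n 1 with h1 | h1
      · interval_cases n
        simpa using h
      · have h2 := ih h1
        calc s = X ^ n * s * Y ^ n := h2
        _ = X ^ n * (X * s * Y) * Y ^ n := by rw [← h]
        _ = (X ^ n * X) * s * (Y * Y ^ n) := by
            simp only [mul_assoc]
        _ = X ^ (n + 1) * s * Y ^ (n + 1) := by rw [← pow_succ, ← pow_succ']
  obtain ⟨n, hn, hidem⟩ := exists_idem_pow X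
  have h1 := iter n hn
  have h2 : X ^ n * s = s := by
    calc X ^ n * s = X ^ n * (X ^ n * s * Y ^ n) := by rw [← h1]
    _ = (X ^ n * X ^ n) * s * Y ^ n := by simp only [mul_assoc]
    _ = X ^ n * s * Y ^ n := by rw [hidem]
    _ = s := h1.symm
  refine ⟨n, hn, h2, ?_⟩
  calc s * Y ^ n = (X ^ n * s) * Y ^ n := by rw [h2]
  _ = s := h1.symm

/-- From `s = s * s * q` conclude `s` is a power of itself. -/
lemma keyL [Finite M] {s q : M} (h : s = s * s * q) : ∃ k, 2 ≤ k ∧ s ^ k = s := by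
  have iter : ∀ n, 1 ≤ n → s = s ^ (n + 1) * q ^ n := by
    intro n hn
    induction n with
    | zero => omega
    | succ n ih =>
      rcases Nat.lt_or_ge n 1 with h1 | h1
      · interval_cases n
        simpa [pow_succ] using h
      · have h2 := ih h1
        calc s = s ^ (n + 1) * q ^ n := h2
        _ = (s ^ n * s) * q ^ n := by rw [pow_succ]
        _ = s ^ n * (s * s * q) * q ^ n := by rw [← h]
        _ = (s ^ n * s * s) * (q * q ^ n) := by simp only [mul_assoc]
        _ = s ^ (n + 2) * q ^ (n + 1) := by
            rw [← pow_succ, ← pow_succ, ← pow_succ']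
  obtain ⟨n, hn, hidem⟩ := exists_idem_pow q
  have h1 := iter n hn
  have h2 : s * q ^ n = s := by
    calc s * q ^ n = s ^ (n + 1) * q ^ n * q ^ n := by rw [← h1]
    _ = s ^ (n + 1) * (q ^ n * q ^ n) := by rw [mul_assoc]
    _ = s ^ (n + 1) * q ^ n := by rw [hidem]
    _ = s := h1.symm
  refine ⟨n + 1, by omega, ?_⟩
  calc s ^ (n + 1) = s ^ n * s := pow_succ s n
  _ = s ^ n * (s * q ^ n) := by rw [h2]
  _ = s ^ (n + 1) * q ^ n := by rw [← mul_assoc, ← pow_succ]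
  _ = s := h1.symm

/-- From `s = A * s * s * B` conclude `s` is a power of itself. -/
lemma keyL2 [Finite M] {s A B : M} (h : s = A * s * s * B) : ∃ k, 2 ≤ k ∧ s ^ k = s := by
  have h' : s = A * s * (s * B) := by rw [← mul_assoc]; exact h
  obtain ⟨n, hn, -, hY⟩ := core h'
  obtain ⟨m, rfl⟩ : ∃ m, n = m + 1 := ⟨n - 1, by omega⟩
  have e1 : (s * B) ^ (m + 1) = s * (B * (s * B) ^ m) := by
    rw [pow_succ', mul_assoc]
  have h2 : s = s * s * (B * (s * B) ^ m) := by
    rw [mul_assoc]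
    rw [e1] at hY
    rw [← mul_assoc] at hY ⊢
    exact hY.symm
  exact keyL h2

/-- From `s = X * s * Z * s * Y` conclude `s = s * W * s` for some `W`. -/
lemma keyA [Finite M] {s X Z Y : M} (h : s = X * s * Z * s * Y) :
    ∃ W : M, s = s * W * s := by
  obtain ⟨n₁, hn₁, hL, -⟩ := core (s := s) (X := X * s * Z) (Y := Y) h
  obtain ⟨m, rfl⟩ : ∃ m, n₁ = m + 1 := ⟨n₁ - 1, by omega⟩
  have h1 : s = X * s * (Z * ((X * s * Z) ^ m * s)) := by
    conv_lhs => rw [← hL]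
    rw [pow_succ']
    simp only [mul_assoc]
  obtain ⟨n₂, hn₂, -, hR⟩ := core h1
  obtain ⟨m₂, rfl⟩ : ∃ m₂, n₂ = m₂ + 1 := ⟨n₂ - 1, by omega⟩
  refine ⟨(Z * ((X * s * Z) ^ m * s)) ^ m₂ * (Z * (X * s * Z) ^ m), ?_⟩
  conv_lhs => rw [← hR]
  rw [pow_succ]
  simp only [mul_assoc]

variable {S : Type*} [Semigroup S]

lemma pow_mem_closure (x : S) : ∀ n, 1 ≤ n →
    ∃ a ∈ Subsemigroup.closure {x}, (a : WithOne S) = (x : WithOne S) ^ n := by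
  intro n hn
  induction n with
  | zero => omega
  | succ n ih =>
    rcases Nat.lt_or_ge n 1 with h1 | h1
    · interval_cases n
      exact ⟨x, Subsemigroup.subset_closure rfl, (pow_one _).symm⟩
    · obtain ⟨a, hmem, ha⟩ := ih h1
      exact ⟨a * x, mul_mem hmem (Subsemigroup.subset_closure rfl),
        by rw [WithOne.coe_mul, ha, pow_succ]⟩

lemma mem_closure_pow (x : S) {a : S} (ha : a ∈ Subsemigroup.closure {x}) :
    ∃ n, 1 ≤ n ∧ (a : WithOne S) = (x : WithOne S) ^ n := by
  induction ha using Subsemigroup.closure_induction with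
  | mem y hy =>
    rcases hy with rfl
    exact ⟨1, le_refl _, by simp⟩
  | mul y z hy hz ihy ihz =>
    obtain ⟨n, hn, h1⟩ := ihy
    obtain ⟨m, hm, h2⟩ := ihz
    exact ⟨n + m, by omega, by rw [WithOne.coe_mul, h1, h2, pow_add]⟩

lemma generates_of_pow {s : S} {k : ℕ} (hk : 2 ≤ k)
    (h : (s : WithOne S) ^ k = (s : WithOne S)) : GeneratesGroup s := by
  set K := k - 1 with hK
  have hK1 : 1 ≤ K := by omega
  have hred : ∀ a, 1 ≤ a → (s : WithOne S) ^ (a + K) = (s : WithOne S) ^ a := by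
    intro a ha
    obtain ⟨m, rfl⟩ : ∃ m, a = m + 1 := ⟨a - 1, by omega⟩
    have e : m + 1 + K = m + k := by omega
    rw [e, pow_add, h, ← pow_succ]
  have hiter : ∀ j a, 1 ≤ a → (s : WithOne S) ^ (a + j * K) = (s : WithOne S) ^ a := by
    intro j
    induction j with
    | zero => simp
    | succ j ih =>
      intro a ha
      have e : a + (j + 1) * K = (a + j * K) + K := by ring
      have h1 : 1 ≤ a + j * K := le_trans ha (Nat.le_add_right a _)
      rw [e, hred _ h1, ih a ha]
  obtain ⟨e, he_mem, he⟩ := pow_mem_closure s K hK1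
  refine ⟨e, he_mem, ?_, ?_⟩
  · intro x hx
    obtain ⟨m, hm, hxm⟩ := mem_closure_pow s hx
    constructor
    · apply WithOne.coe_inj.mp
      rw [WithOne.coe_mul, he, hxm, ← pow_add, show K + m = m + K by omega, hred m hm]
    · apply WithOne.coe_inj.mp
      rw [WithOne.coe_mul, he, hxm, ← pow_add, hred m hm]
  · intro x hx
    obtain ⟨m, hm, hxm⟩ := mem_closure_pow s hx
    have hmul : (m + 1) * K = m * K + K := by ring
    have hj : 1 ≤ (m + 1) * K - m := by
      have h2 : m + 1 ≤ (m + 1) * K := Nat.le_mul_of_pos_right _ (by omega)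
      omega
    obtain ⟨y, hy_mem, hy⟩ := pow_mem_closure s ((m + 1) * K - m) hj
    have e1 : m + ((m + 1) * K - m) = K + m * K := by
      have h2 : m + 1 ≤ (m + 1) * K := Nat.le_mul_of_pos_right _ (by omega)
      omega
    refine ⟨y, hy_mem, ?_, ?_⟩
    · apply WithOne.coe_inj.mp
      rw [WithOne.coe_mul, hxm, hy, ← pow_add, he, e1, hiter m K hK1]
    · apply WithOne.coe_inj.mp
      rw [WithOne.coe_mul, hxm, hy, ← pow_add, he, show (m + 1) * K - m + m = m + ((m+1)*K - m) by omega, e1,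
        hiter m K hK1]

lemma sv_collapse [Finite S] (s x : S) (hx : s * x * s = s) :
    ∀ v ∈ Submonoid.closure {((s * x : S) : WithOne S), ((x * s : S) : WithOne S)},
      (↑s * v = (↑s : WithOne S)) ∨ ∃ C : WithOne S, ↑s * v = ↑s * ↑s * C := by
  intro v hv
  induction hv using Submonoid.closure_induction with
  | one => left; simp
  | mem y hy =>
    rcases hy with rfl | rfl
    · right
      refine ⟨↑x, ?_⟩
      rw [← WithOne.coe_mul, ← WithOne.coe_mul, ← WithOne.coe_mul]
      rw [mul_assoc]
    · left
      rw [← WithOne.coe_mul, ← mul_assoc, hx]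
  | mul y z hy hz ihy ihz =>
    rcases ihy with h1 | ⟨C, h1⟩
    · rw [← mul_assoc, h1]
      exact ihz
    · right
      exact ⟨C * z, by rw [← mul_assoc, h1, mul_assoc]⟩


lemma coe_pow_exists (x : S) : ∀ n, 1 ≤ n → ∃ a : S, (a : WithOne S) = (x : WithOne S) ^ n := by
  intro n hn
  induction n with
  | zero => omega
  | succ n ih =>
    rcases Nat.lt_or_ge n 1 with h1 | h1
    · interval_cases n
      exact ⟨x, (pow_one _).symm⟩
    · obtain ⟨a, ha⟩ := ih h1
      exact ⟨a * x, by rw [WithOne.coe_mul, ha, pow_succ]⟩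

lemma split1 [DecidableEq S] (s e f : S) :
    ∀ (l : List S) (b : S), b ∈ ({s, e, f} : Set S) → (∀ x ∈ l, x ∈ ({s, e, f} : Set S)) →
      1 ≤ (b :: l).count s →
      ∃ v Y : WithOne S, v ∈ Submonoid.closure {(e : WithOne S), (f : WithOne S)} ∧
        ((listProd (· * ·) b l : S) : WithOne S) = v * ↑s * Y := by
  intro l
  induction l with
  | nil =>
    intro b hb _ hc
    have hbs : b = s := by
      by_contra hne
      simp [List.count_cons, hne] at hc
    subst hbs
    refine ⟨1, 1, one_mem _, ?_⟩
    show ((b : S) : WithOne S) = 1 * ↑b * 1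
    simp
  | cons c l' ih =>
    intro b hb hl hc
    by_cases hbs : b = s
    · subst hbs
      refine ⟨1, ↑(listProd (· * ·) c l'), one_mem _, ?_⟩
      show ((b * listProd (· * ·) c l' : S) : WithOne S) = 1 * ↑b * ↑(listProd (· * ·) c l')
      rw [WithOne.coe_mul, one_mul]
    · have hb' : (b : WithOne S) ∈ ({(e : WithOne S), (f : WithOne S)} : Set (WithOne S)) := by
        rcases hb with h | h | h
        · exact absurd h hbs
        · subst h; left; rfl
        · subst h; right; rfl
      have hc' : 1 ≤ (c :: l').count s := by
        have h2 : (b :: c :: l').count s = (c :: l').count s := by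
          simp [List.count_cons, hbs]
        omega
      obtain ⟨v, Y, hv, hP⟩ := ih c (hl c (by simp)) (fun x hx => hl x (by simp [hx])) hc'
      refine ⟨↑b * v, Y, mul_mem (Submonoid.subset_closure hb') hv, ?_⟩
      show ((b * listProd (· * ·) c l' : S) : WithOne S) = ↑b * v * ↑s * Y
      rw [WithOne.coe_mul, hP]
      simp only [mul_assoc]

lemma split2 [DecidableEq S] (s e f : S) :
    ∀ (l : List S) (a : S), a ∈ ({s, e, f} : Set S) → (∀ x ∈ l, x ∈ ({s, e, f} : Set S)) →
      2 ≤ (a :: l).count s →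
      ∃ X v Y : WithOne S, v ∈ Submonoid.closure {(e : WithOne S), (f : WithOne S)} ∧
        ((listProd (· * ·) a l : S) : WithOne S) = X * ↑s * v * ↑s * Y := by
  intro l
  induction l with
  | nil =>
    intro a ha _ hc
    exfalso
    have h2 : (a :: ([] : List S)).count s ≤ 1 := by
      have : (a :: ([] : List S)).count s ≤ (a :: ([] : List S)).length := List.count_le_length
      simpa using this
    omega
  | cons c l' ih =>
    intro a ha hl hc
    by_cases has : a = s
    · subst has
      have hc' : 1 ≤ (c :: l').count a := by
        have h2 : (a :: c :: l').count a = (c :: l').count a + 1 := by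
          simp [List.count_cons]
        omega
      obtain ⟨v, Y, hv, hP⟩ := split1 a e f l' c (hl c (by simp))
        (fun x hx => hl x (by simp [hx])) hc'
      refine ⟨1, v, Y, hv, ?_⟩
      show ((a * listProd (· * ·) c l' : S) : WithOne S) = 1 * ↑a * v * ↑a * Y
      rw [WithOne.coe_mul, hP, one_mul]
      simp only [mul_assoc]
    · have hb' : (a : WithOne S) ∈ ({(e : WithOne S), (f : WithOne S)} : Set (WithOne S)) := by
        rcases ha with h | h | h
        · exact absurd h has
        · subst h; left; rfl
        · subst h; right; rfl
      have hc' : 2 ≤ (c :: l').count s := by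
        have h2 : (a :: c :: l').count s = (c :: l').count s := by
          simp [List.count_cons, has]
        omega
      obtain ⟨X, v, Y, hv, hP⟩ := ih c (hl c (by simp)) (fun x hx => hl x (by simp [hx])) hc'
      refine ⟨↑a * X, v, Y, hv, ?_⟩
      show ((a * listProd (· * ·) c l' : S) : WithOne S) = ↑a * X * ↑s * v * ↑s * Y
      rw [WithOne.coe_mul, hP]
      simp only [mul_assoc]


end Stmt3Aux

/-- If `r`, `s`, `t` are elements of a finite semigroup such that `s` does not generate a
group and `rs = st = s`, then there are idempotents `e`, `f` with `es = s` and `sf = s` such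
that every product of elements of `{s, e, f}` in which `s` occurs at least twice is not `s`. -/
theorem stmt_3 {S : Type*} [Semigroup S] [Finite S] [DecidableEq S] (r s t : S)
    (hng : ¬ GeneratesGroup s) (hr : r * s = s) (ht : s * t = s) :
    ∃ e f : S, e * e = e ∧ f * f = f ∧ e * s = s ∧ s * f = s ∧
      ∀ (a : S) (l : List S), a ∈ ({s, e, f} : Set S) → (∀ x ∈ l, x ∈ ({s, e, f} : Set S)) →
        2 ≤ (a :: l).count s → listProd (· * ·) a l ≠ s := by
  haveI : Finite (WithOne S) := by
    haveI := Fintype.ofFinite S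
    exact inferInstanceAs (Finite (Option S))
  have hks : ∀ k, 2 ≤ k → ¬ ((s : WithOne S) ^ k = (s : WithOne S)) :=
    fun k hk hkk => hng (Stmt3Aux.generates_of_pow hk hkk)
  by_cases hreg : ∃ x : S, s * x * s = s
  · obtain ⟨x, hx⟩ := hreg
    refine ⟨s * x, x * s, ?_, ?_, ?_, ?_, ?_⟩
    · calc s * x * (s * x) = (s * x * s) * x := (mul_assoc (s * x) s x).symm
      _ = s * x := by rw [hx]
    · calc x * s * (x * s) = x * (s * x * s) := by simp only [mul_assoc]
      _ = x * s := by rw [hx]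
    · exact hx
    · calc s * (x * s) = s * x * s := by rw [mul_assoc]
      _ = s := hx
    · intro a l ha hl hcnt hprod
      obtain ⟨X, v, Y, hv, heq⟩ := Stmt3Aux.split2 s (s * x) (x * s) l a ha hl hcnt
      rw [hprod] at heq
      rcases Stmt3Aux.sv_collapse s x hx v hv with h1 | ⟨C, h1⟩
      · have h2 : ((s : WithOne S)) = X * ↑s * ↑s * Y := by
          calc ((s : WithOne S)) = X * ↑s * v * ↑s * Y := heq
          _ = X * (↑s * v) * ↑s * Y := by rw [mul_assoc X _ v]
          _ = X * ↑s * ↑s * Y := by rw [h1]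
        obtain ⟨k, hk2, hkk⟩ := Stmt3Aux.keyL2 h2
        exact hks k hk2 hkk
      · have h2 : ((s : WithOne S)) = X * ↑s * ↑s * (C * (↑s * Y)) := by
          calc ((s : WithOne S)) = X * ↑s * v * ↑s * Y := heq
          _ = X * (↑s * v) * (↑s * Y) := by simp only [mul_assoc]
          _ = X * (↑s * ↑s * C) * (↑s * Y) := by rw [h1]
          _ = X * ↑s * ↑s * (C * (↑s * Y)) := by simp only [mul_assoc]
        obtain ⟨k, hk2, hkk⟩ := Stmt3Aux.keyL2 h2
        exact hks k hk2 hkk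
  · obtain ⟨n, hn1, hidem⟩ := Stmt3Aux.exists_idem_pow (r : WithOne S)
    obtain ⟨e, he⟩ := Stmt3Aux.coe_pow_exists r n hn1
    obtain ⟨n', hn1', hidem'⟩ := Stmt3Aux.exists_idem_pow (t : WithOne S)
    obtain ⟨f, hf⟩ := Stmt3Aux.coe_pow_exists t n' hn1'
    have hrs : ∀ m, ((r : WithOne S)) ^ m * ↑s = ↑s := by
      intro m
      induction m with
      | zero => simp
      | succ m ih =>
        rw [pow_succ, mul_assoc, ← WithOne.coe_mul, hr, ih]
    have hts : ∀ m, (↑s : WithOne S) * ((t : WithOne S)) ^ m = ↑s := by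
      intro m
      induction m with
      | zero => simp
      | succ m ih =>
        rw [pow_succ, ← mul_assoc, ih, ← WithOne.coe_mul, ht]
    refine ⟨e, f, ?_, ?_, ?_, ?_, ?_⟩
    · apply WithOne.coe_inj.mp
      rw [WithOne.coe_mul, he, hidem]
    · apply WithOne.coe_inj.mp
      rw [WithOne.coe_mul, hf, hidem']
    · apply WithOne.coe_inj.mp
      rw [WithOne.coe_mul, he, hrs n]
    · apply WithOne.coe_inj.mp
      rw [WithOne.coe_mul, hf, hts n']
    · intro a l ha hl hcnt hprod
      obtain ⟨X, v, Y, hv, heq⟩ := Stmt3Aux.split2 s e f l a ha hl hcnt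
      rw [hprod] at heq
      obtain ⟨W, hW⟩ := Stmt3Aux.keyA heq
      have hcases := WithOne.cases_on
        (P := fun W' : WithOne S => W' = 1 ∨ ∃ w : S, W' = ↑w) W
        (Or.inl rfl) (fun a' => Or.inr ⟨a', rfl⟩)
      rcases hcases with rfl | ⟨w, rfl⟩
      · apply hks 2 le_rfl
        rw [pow_two]
        simpa using hW.symm
      · refine hreg ⟨w, WithOne.coe_inj.mp ?_⟩
        rw [WithOne.coe_mul, WithOne.coe_mul]
        exact hW.symm
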